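/- In the dollar auction game, the strategy profile in which both agents always continue bidding (choose 2 at every position) is rational and divergent: Rat_∞(s) and diverg(s) hold for this profile s. -/

import Mathlib

noncomputable section

/-- The two agents. -/
inductive Ag : Type
  | A
  | B
deriving DecidableEq

/-- The set of choices `{1, 2}`. -/
inductive Choice : Type
  | one
  | two
deriving DecidableEq

/-- The polynomial functor whose final coalgebra is the set of finite or
infinite strategy profiles: a node is either an ending position carrying a
utility assignment (no children) or an internal position carrying an agent
and a choice (two children, indexed by `Bool`). -/
def SPF (Agent : Type) : PFunctor.{0} :=
  ⟨(Agent → ℝ) ⊕ (Agent × Choice), fun x => Sum.rec (fun _ => Empty) (fun _ => Bool) x⟩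

/-- Finite or infinite strategy profiles, as the M-type (final coalgebra). -/
def StratProf (Agent : Type) : Type :=
  (SPF Agent).M

/-- The ending position `⟨u⟩`. -/
def leafP {Agent : Type} (u : Agent → ℝ) : StratProf Agent :=
  PFunctor.M.mk ⟨Sum.inl u, fun e => Empty.elim e⟩

/-- The strategy profile `⟨a, c, s₁, s₂⟩`. -/
def nodeP {Agent : Type} (a : Agent) (c : Choice) (s₁ s₂ : StratProf Agent) :
    StratProf Agent :=
  PFunctor.M.mk ⟨Sum.inr (a, c), fun b => bif b then s₂ else s₁⟩

/-- The child selected by choice `c`. -/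
def cchild {Agent : Type} (c : Choice) (s₁ s₂ : StratProf Agent) : StratProf Agent :=
  match c with
  | .one => s₁
  | .two => s₂

/-- `conv s`: following the choices of `s` reaches an ending position after
finitely many steps (inductive definition). -/
inductive Conv {Agent : Type} : StratProf Agent → Prop
  | leaf (u : Agent → ℝ) : Conv (leafP u)
  | node1 (a : Agent) (s₁ s₂ : StratProf Agent) :
      Conv s₁ → Conv (nodeP a Choice.one s₁ s₂)
  | node2 (a : Agent) (s₁ s₂ : StratProf Agent) :
      Conv s₂ → Conv (nodeP a Choice.two s₁ s₂)

/-- The graph of the (partial) utility assignment `ŝ`: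
`UtilR s u` holds iff following the choices of `s` reaches the ending
position `⟨u⟩`. -/
inductive UtilR {Agent : Type} : StratProf Agent → (Agent → ℝ) → Prop
  | leaf (u : Agent → ℝ) : UtilR (leafP u) u
  | node1 (a : Agent) (s₁ s₂ : StratProf Agent) (u : Agent → ℝ) :
      UtilR s₁ u → UtilR (nodeP a Choice.one s₁ s₂) u
  | node2 (a : Agent) (s₁ s₂ : StratProf Agent) (u : Agent → ℝ) :
      UtilR s₂ u → UtilR (nodeP a Choice.two s₁ s₂) u

open Classical in
/-- The utility assignment `ŝ` (an arbitrary default on non-convergent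
profiles). -/
def util {Agent : Type} (s : StratProf Agent) : Agent → ℝ :=
  if h : ∃ u, UtilR s u then h.choose else fun _ => 0

/-- `□P`, the coinductive `always` modality: `P` holds at every position of
the strategy profile (greatest fixed point). -/
def Always {Agent : Type} (P : StratProf Agent → Prop) (s : StratProf Agent) : Prop :=
  ∃ R : StratProf Agent → Prop, R s ∧ ∀ t, R t →
    P t ∧ ∀ a c s₁ s₂, t = nodeP a c s₁ s₂ → R s₁ ∧ R s₂

/-- `PE s`: `s` is always-convergent and the choice at the root of `s` is at
least as good, for the agent who owns the root, as the other choice. -/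
def PE {Agent : Type} (s : StratProf Agent) : Prop :=
  Always Conv s ∧
    (∀ a s₁ s₂, s = nodeP a Choice.one s₁ s₂ → util s₁ a ≥ util s₂ a) ∧
    (∀ a s₁ s₂, s = nodeP a Choice.two s₁ s₂ → util s₂ a ≥ util s₁ a)

/-- Subgame perfect equilibrium: `□PE`. -/
def SPE {Agent : Type} : StratProf Agent → Prop :=
  Always PE

/-- `s =_g s'`: the two strategy profiles have the same underlying game
(coinductive definition). -/
def SameGame {Agent : Type} (s s' : StratProf Agent) : Prop :=
  ∃ R : StratProf Agent → StratProf Agent → Prop, R s s' ∧ ∀ t t', R t t' →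
    (∃ u, t = leafP u ∧ t' = leafP u) ∨
    (∃ a c c' s₁ s₂ s₁' s₂',
      t = nodeP a c s₁ s₂ ∧ t' = nodeP a c' s₁' s₂' ∧ R s₁ s₁' ∧ R s₂ s₂')

/-- `Rat_∞`: rationality for finite or infinite strategy profiles
(coinductive definition). -/
def RatInf {Agent : Type} (s : StratProf Agent) : Prop :=
  ∃ R : StratProf Agent → Prop, R s ∧ ∀ t, R t →
    (∃ u, t = leafP u) ∨
    (∃ a c s₁ s₂ s₁' s₂', t = nodeP a c s₁ s₂ ∧
      SameGame (nodeP a c s₁' s₂') (nodeP a c s₁ s₂) ∧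
      SPE (nodeP a c s₁' s₂') ∧ R (cchild c s₁ s₂))

/-- `diverg`: following the choices never reaches an ending position
(coinductive definition). -/
def Diverg {Agent : Type} (s : StratProf Agent) : Prop :=
  ∃ R : StratProf Agent → Prop, R s ∧ ∀ t, R t →
    ∃ a c s₁ s₂, t = nodeP a c s₁ s₂ ∧ R (cchild c s₁ s₂)

/-- The agent moving at position `n` of an infinite comb game: Alice at even
positions, Bob at odd positions. -/
def agAt (n : ℕ) : Ag :=
  if n % 2 = 0 then Ag.A else Ag.B

/-- Leaf utilities of the dollar auction when the mover quits at position
`n` (with `v = 100` and bid increment `5`): at `n = 2k`, Alice quitting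
yields `(A ↦ -5k, B ↦ 100 - 5k)`; at `n = 2k + 1`, Bob quitting yields
`(B ↦ -5k, A ↦ 100 - 5(k+1))`. -/
def uDollar (n : ℕ) : Ag → ℝ :=
  if n % 2 = 0 then fun x =>
    match x with
    | Ag.A => -5 * ((n / 2 : ℕ) : ℝ)
    | Ag.B => 100 - 5 * ((n / 2 : ℕ) : ℝ)
  else fun x =>
    match x with
    | Ag.A => 100 - 5 * (((n / 2 : ℕ) : ℝ) + 1)
    | Ag.B => -5 * ((n / 2 : ℕ) : ℝ)

/-- One corecursion step for the strategy profile of the dollar auction in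
which both agents always continue bidding (choose `2`). -/
def dollarStep : (ℕ ⊕ (Ag → ℝ)) → (SPF Ag).Obj (ℕ ⊕ (Ag → ℝ))
  | Sum.inr u => ⟨Sum.inl u, fun e => Empty.elim e⟩
  | Sum.inl n =>
      ⟨Sum.inr (agAt n, Choice.two),
        fun b => bif b then Sum.inl (n + 1) else Sum.inr (uDollar n)⟩

/-- The strategy profile of the dollar auction, starting at position `n`, in
which both agents always continue bidding. -/
def dollarAlwaysContinue (n : ℕ) : StratProf Ag :=
  PFunctor.M.corec dollarStep (Sum.inl n)


section Aux

open PFunctor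

lemma corec_unfold {α} (g : α → (SPF Ag).Obj α) (x : α) :
    M.corec g x = M.mk ((SPF Ag).map (M.corec g) (g x)) := by
  rw [← M.dest_corec]; exact (M.mk_dest _).symm

lemma leaf_inj {u v : Ag → ℝ} (h : leafP u = leafP v) : u = v := by
  have h2 := M.mk_inj h
  have h3 := congrArg Sigma.fst h2
  exact Sum.inl.inj h3

lemma leaf_ne_node (u : Ag → ℝ) (a : Ag) (c : Choice) (s₁ s₂ : StratProf Ag) :
    leafP u ≠ nodeP a c s₁ s₂ := by
  intro h
  have h2 := M.mk_inj h
  have := congrArg Sigma.fst h2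
  simp at this

lemma node_inj {a a' : Ag} {c c' : Choice} {s₁ s₂ s₁' s₂' : StratProf Ag}
    (h : nodeP a c s₁ s₂ = nodeP a' c' s₁' s₂') :
    a = a' ∧ c = c' ∧ s₁ = s₁' ∧ s₂ = s₂' := by
  have h2 := M.mk_inj h
  replace h2 := Sigma.mk.inj_iff.mp h2
  obtain ⟨h3, h4⟩ := h2
  obtain ⟨rfl, rfl⟩ : a = a' ∧ c = c' := by
    constructor <;> · injection h3 with h5; cases h5; rfl
  refine ⟨rfl, rfl, ?_, ?_⟩
  · exact congrFun (eq_of_heq h4) false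
  · exact congrFun (eq_of_heq h4) true

lemma dollar_leaf (u : Ag → ℝ) :
    (PFunctor.M.corec dollarStep (Sum.inr u) : StratProf Ag) = leafP u := by
  rw [corec_unfold]
  unfold leafP
  have : (SPF Ag).map (M.corec dollarStep) (dollarStep (Sum.inr u)) =
      ⟨Sum.inl u, fun e => Empty.elim e⟩ := by
    show (⟨Sum.inl u, M.corec dollarStep ∘ (fun e => Empty.elim e)⟩ :
      (SPF Ag).Obj (StratProf Ag)) = _
    congr 1
    funext e; exact e.elim
  rw [this]

lemma dollar_unfold (n : ℕ) :
    dollarAlwaysContinue n =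
      nodeP (agAt n) Choice.two (leafP (uDollar n)) (dollarAlwaysContinue (n + 1)) := by
  show M.corec dollarStep (Sum.inl n) = _
  rw [corec_unfold]
  unfold nodeP
  have : (SPF Ag).map (M.corec dollarStep) (dollarStep (Sum.inl n)) =
      ⟨Sum.inr (agAt n, Choice.two),
        fun b => bif b then dollarAlwaysContinue (n + 1) else leafP (uDollar n)⟩ := by
    show (⟨Sum.inr (agAt n, Choice.two), M.corec dollarStep ∘ _⟩ :
      (SPF Ag).Obj (StratProf Ag)) = _
    congr 1
    funext b
    cases b
    · exact dollar_leaf (uDollar n)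
    · rfl
  rw [this]

/-- One corecursion step for the SPE witness with parity `p`: at position `m`,
continue iff `m % 2 = p`, otherwise quit. -/
def speStep (p : ℕ) : (ℕ ⊕ (Ag → ℝ)) → (SPF Ag).Obj (ℕ ⊕ (Ag → ℝ))
  | Sum.inr u => ⟨Sum.inl u, fun e => Empty.elim e⟩
  | Sum.inl n =>
      ⟨Sum.inr (agAt n, if n % 2 = p then Choice.two else Choice.one),
        fun b => bif b then Sum.inl (n + 1) else Sum.inr (uDollar n)⟩

def speP (p n : ℕ) : StratProf Ag :=
  PFunctor.M.corec (speStep p) (Sum.inl n)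

lemma spe_leaf (p : ℕ) (u : Ag → ℝ) :
    (PFunctor.M.corec (speStep p) (Sum.inr u) : StratProf Ag) = leafP u := by
  rw [corec_unfold]
  unfold leafP
  have : (SPF Ag).map (M.corec (speStep p)) (speStep p (Sum.inr u)) =
      ⟨Sum.inl u, fun e => Empty.elim e⟩ := by
    show (⟨Sum.inl u, M.corec (speStep p) ∘ (fun e => Empty.elim e)⟩ :
      (SPF Ag).Obj (StratProf Ag)) = _
    congr 1
    funext e; exact e.elim
  rw [this]

lemma spe_unfold (p n : ℕ) :
    speP p n = nodeP (agAt n) (if n % 2 = p then Choice.two else Choice.one)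
      (leafP (uDollar n)) (speP p (n + 1)) := by
  show M.corec (speStep p) (Sum.inl n) = _
  rw [corec_unfold]
  unfold nodeP
  have : (SPF Ag).map (M.corec (speStep p)) (speStep p (Sum.inl n)) =
      ⟨Sum.inr (agAt n, if n % 2 = p then Choice.two else Choice.one),
        fun b => bif b then speP p (n + 1) else leafP (uDollar n)⟩ := by
    show (⟨Sum.inr (agAt n, _), M.corec (speStep p) ∘ _⟩ :
      (SPF Ag).Obj (StratProf Ag)) = _
    congr 1
    funext b
    cases b
    · exact spe_leaf p (uDollar n)
    · rfl
  rw [this]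

lemma utilR_leaf_inv {u v : Ag → ℝ} (h : UtilR (leafP u) v) : v = u := by
  generalize hs : leafP u = s at h
  cases h with
  | leaf w => exact (leaf_inj hs).symm
  | node1 a s₁ s₂ w _ => exact absurd hs (leaf_ne_node _ _ _ _ _)
  | node2 a s₁ s₂ w _ => exact absurd hs (leaf_ne_node _ _ _ _ _)

lemma utilR_node_inv {a : Ag} {c : Choice} {s₁ s₂ : StratProf Ag} {v : Ag → ℝ}
    (h : UtilR (nodeP a c s₁ s₂) v) : UtilR (cchild c s₁ s₂) v := by
  generalize hs : nodeP a c s₁ s₂ = s at h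
  cases h with
  | leaf w => exact absurd hs.symm (leaf_ne_node _ _ _ _ _)
  | node1 a' s₁' s₂' w hw =>
      obtain ⟨rfl, rfl, rfl, rfl⟩ := node_inj hs
      exact hw
  | node2 a' s₁' s₂' w hw =>
      obtain ⟨rfl, rfl, rfl, rfl⟩ := node_inj hs
      exact hw

lemma utilR_unique {s : StratProf Ag} {u : Ag → ℝ} (h : UtilR s u) :
    ∀ v, UtilR s v → u = v := by
  induction h with
  | leaf w => intro v hv; exact (utilR_leaf_inv hv).symm
  | node1 a s₁ s₂ w _ ih => intro v hv; exact ih v (utilR_node_inv hv)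
  | node2 a s₁ s₂ w _ ih => intro v hv; exact ih v (utilR_node_inv hv)

lemma util_eq {s : StratProf Ag} {u : Ag → ℝ} (h : UtilR s u) : util s = u := by
  unfold util
  rw [dif_pos ⟨u, h⟩]
  exact utilR_unique (Exists.choose_spec (⟨u, h⟩ : ∃ v, UtilR s v)) u h

lemma utilR_spe (p n : ℕ) (hp : p < 2) :
    UtilR (speP p n) (if n % 2 = p then uDollar (n + 1) else uDollar n) := by
  by_cases h : n % 2 = p
  · rw [if_pos h, spe_unfold, if_pos h]
    apply UtilR.node2
    have h2 : ¬ (n + 1) % 2 = p := by omega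
    rw [spe_unfold, if_neg h2]
    apply UtilR.node1
    exact UtilR.leaf _
  · rw [if_neg h, spe_unfold, if_neg h]
    apply UtilR.node1
    exact UtilR.leaf _

lemma conv_spe (p n : ℕ) (hp : p < 2) : Conv (speP p n) := by
  by_cases h : n % 2 = p
  · rw [spe_unfold, if_pos h]
    apply Conv.node2
    have h2 : ¬ (n + 1) % 2 = p := by omega
    rw [spe_unfold, if_neg h2]
    exact Conv.node1 _ _ _ (Conv.leaf _)
  · rw [spe_unfold, if_neg h]
    exact Conv.node1 _ _ _ (Conv.leaf _)

lemma always_conv_leaf (u : Ag → ℝ) : Always Conv (leafP u) := by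
  refine ⟨fun t => ∃ v, t = leafP v, ⟨u, rfl⟩, ?_⟩
  rintro t ⟨v, rfl⟩
  refine ⟨Conv.leaf v, ?_⟩
  intro a c s₁ s₂ h
  exact absurd h (leaf_ne_node _ _ _ _ _)

lemma always_conv_spe (p n : ℕ) (hp : p < 2) : Always Conv (speP p n) := by
  refine ⟨fun t => (∃ k, t = speP p k) ∨ (∃ v, t = leafP v), Or.inl ⟨n, rfl⟩, ?_⟩
  rintro t (⟨k, rfl⟩ | ⟨v, rfl⟩)
  · refine ⟨conv_spe p k hp, ?_⟩
    intro a c s₁ s₂ h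
    rw [spe_unfold] at h
    obtain ⟨_, _, h1, h2⟩ := node_inj h.symm
    exact ⟨Or.inr ⟨_, h1⟩, Or.inl ⟨_, h2⟩⟩
  · refine ⟨Conv.leaf v, ?_⟩
    intro a c s₁ s₂ h
    exact absurd h (leaf_ne_node _ _ _ _ _)

lemma key1 (m : ℕ) : uDollar (m + 1) (agAt m) ≥ uDollar m (agAt m) := by
  rcases Nat.even_or_odd m with ⟨k, hk⟩ | ⟨k, hk⟩
  · subst hk
    have h1 : (k + k) % 2 = 0 := by omega
    have h2 : (k + k + 1) % 2 = 1 := by omega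
    have h3 : (k + k) / 2 = k := by omega
    have h4 : (k + k + 1) / 2 = k := by omega
    simp only [uDollar, agAt, h1, h2, h3, h4]
    push_cast
    linarith
  · subst hk
    have h1 : (2 * k + 1) % 2 = 1 := by omega
    have h2 : (2 * k + 1 + 1) % 2 = 0 := by omega
    have h3 : (2 * k + 1) / 2 = k := by omega
    have h4 : (2 * k + 1 + 1) / 2 = k + 1 := by omega
    simp only [uDollar, agAt, h1, h2, h3, h4]
    push_cast
    linarith

lemma key2 (m : ℕ) : uDollar m (agAt m) ≥ uDollar (m + 2) (agAt m) := by
  rcases Nat.even_or_odd m with ⟨k, hk⟩ | ⟨k, hk⟩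
  · subst hk
    have h1 : (k + k) % 2 = 0 := by omega
    have h2 : (k + k + 2) % 2 = 0 := by omega
    have h3 : (k + k) / 2 = k := by omega
    have h4 : (k + k + 2) / 2 = k + 1 := by omega
    simp only [uDollar, agAt, h1, h2, h3, h4]
    push_cast
    linarith
  · subst hk
    have h1 : (2 * k + 1) % 2 = 1 := by omega
    have h2 : (2 * k + 1 + 2) % 2 = 1 := by omega
    have h3 : (2 * k + 1) / 2 = k := by omega
    have h4 : (2 * k + 1 + 2) / 2 = k + 1 := by omega
    simp only [uDollar, agAt, h1, h2, h3, h4]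
    push_cast
    linarith

lemma pe_spe (p n : ℕ) (hp : p < 2) : PE (speP p n) := by
  refine ⟨always_conv_spe p n hp, ?_, ?_⟩
  · intro a s₁ s₂ h
    rw [spe_unfold] at h
    obtain ⟨ha, hc, h1, h2⟩ := node_inj h.symm
    by_cases hn : n % 2 = p
    · rw [if_pos hn] at hc; exact absurd hc (by simp)
    · rw [h1, h2, ha]
      have hu1 : util (leafP (uDollar n)) = uDollar n := util_eq (UtilR.leaf _)
      have hn2 : (n + 1) % 2 = p := by omega
      have hu2 : util (speP p (n + 1)) = uDollar (n + 2) := by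
        have := utilR_spe p (n + 1) hp
        rw [if_pos hn2] at this
        exact util_eq this
      rw [hu1, hu2]
      exact key2 n
  · intro a s₁ s₂ h
    rw [spe_unfold] at h
    obtain ⟨ha, hc, h1, h2⟩ := node_inj h.symm
    by_cases hn : n % 2 = p
    · rw [h1, h2, ha]
      have hu1 : util (leafP (uDollar n)) = uDollar n := util_eq (UtilR.leaf _)
      have hn2 : ¬ (n + 1) % 2 = p := by omega
      have hu2 : util (speP p (n + 1)) = uDollar (n + 1) := by
        have := utilR_spe p (n + 1) hp
        rw [if_neg hn2] at this
        exact util_eq this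
      rw [hu1, hu2]
      exact key1 n
    · rw [if_neg hn] at hc; exact absurd hc (by simp)

lemma pe_leaf (u : Ag → ℝ) : PE (leafP u) := by
  refine ⟨always_conv_leaf u, ?_, ?_⟩ <;>
    · intro a s₁ s₂ h; exact absurd h (leaf_ne_node _ _ _ _ _)

lemma spe_spe (p n : ℕ) (hp : p < 2) : SPE (speP p n) := by
  refine ⟨fun t => (∃ k, t = speP p k) ∨ (∃ v, t = leafP v), Or.inl ⟨n, rfl⟩, ?_⟩
  rintro t (⟨k, rfl⟩ | ⟨v, rfl⟩)
  · refine ⟨pe_spe p k hp, ?_⟩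
    intro a c s₁ s₂ h
    rw [spe_unfold] at h
    obtain ⟨_, _, h1, h2⟩ := node_inj h.symm
    exact ⟨Or.inr ⟨_, h1⟩, Or.inl ⟨_, h2⟩⟩
  · refine ⟨pe_leaf v, ?_⟩
    intro a c s₁ s₂ h
    exact absurd h (leaf_ne_node _ _ _ _ _)

lemma samegame_spe (p n : ℕ) : SameGame (speP p n) (dollarAlwaysContinue n) := by
  refine ⟨fun t t' => (∃ k, t = speP p k ∧ t' = dollarAlwaysContinue k) ∨
    (∃ v, t = leafP v ∧ t' = leafP v), Or.inl ⟨n, rfl, rfl⟩, ?_⟩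
  rintro t t' (⟨k, rfl, rfl⟩ | ⟨v, rfl, rfl⟩)
  · right
    exact ⟨agAt k, (if k % 2 = p then Choice.two else Choice.one), Choice.two,
      leafP (uDollar k), speP p (k + 1), leafP (uDollar k), dollarAlwaysContinue (k + 1),
      spe_unfold p k, dollar_unfold k, Or.inr ⟨_, rfl, rfl⟩, Or.inl ⟨k + 1, rfl, rfl⟩⟩
  · left; exact ⟨v, rfl, rfl⟩

end Aux

/-- In the dollar auction, the strategy profile in which both agents always
continue bidding (choose 2 at every position) is rational and divergent. -/
theorem dollar_alwaysContinue_rat_and_diverg :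
    RatInf (dollarAlwaysContinue 0) ∧ Diverg (dollarAlwaysContinue 0) := by
  constructor
  · refine ⟨fun t => ∃ n, t = dollarAlwaysContinue n, ⟨0, rfl⟩, ?_⟩
    rintro t ⟨n, rfl⟩
    right
    refine ⟨agAt n, Choice.two, leafP (uDollar n), dollarAlwaysContinue (n + 1),
      leafP (uDollar n), speP (n % 2) (n + 1), dollar_unfold n, ?_, ?_, ?_⟩
    · have h := samegame_spe (n % 2) n
      rw [spe_unfold, if_pos rfl] at h
      rw [dollar_unfold n] at h
      exact h
    · have h := spe_spe (n % 2) n (by omega)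
      rw [spe_unfold, if_pos rfl] at h
      exact h
    · exact ⟨n + 1, rfl⟩
  · refine ⟨fun t => ∃ n, t = dollarAlwaysContinue n, ⟨0, rfl⟩, ?_⟩
    rintro t ⟨n, rfl⟩
    exact ⟨agAt n, Choice.two, leafP (uDollar n), dollarAlwaysContinue (n + 1),
      dollar_unfold n, ⟨n + 1, rfl⟩⟩
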